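/- Let z : {(s,t) : s > 0} → ℝ⁴ (with the neutral metric ⟨x,y⟩ = x₁y₁ + x₂y₂ − x₃y₃ − x₄y₄) be given by z(s,t) = (−4s^{1/2}cos t + s·sin t + (1/2)cos t, −4s^{1/2}sin t − s·cos t + (1/2)sin t, −4s^{1/2}sin t − s·cos t − (1/2)sin t, −4s^{1/2}cos t + s·sin t − (1/2)cos t). Then ⟨z_s, z_s⟩ = 0, ⟨z_s, z_t⟩ = −1, and ⟨z_t, z_t⟩ = −8·s^{1/2}. -/

import Mathlib

/-- The neutral (index 2) inner product on ℝ⁴. -/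
def neutralInner (x y : Fin 4 → ℝ) : ℝ :=
  x 0 * y 0 + x 1 * y 1 - x 2 * y 2 - x 3 * y 3

private lemma hds {s : ℝ} (hs : 0 < s) (a b c : ℝ) :
    HasDerivAt (fun s' => a * Real.sqrt s' + b * s' + c)
      (a * (1 / (2 * Real.sqrt s)) + b) s := by
  have h := (((Real.hasDerivAt_sqrt hs.ne').const_mul a).add
    ((hasDerivAt_id s).const_mul b)).add_const c
  simpa using h

private lemma hdt (t a b c : ℝ) :
    HasDerivAt (fun t' => a * Real.cos t' + b * Real.sin t' + c)
      (a * (-Real.sin t) + b * Real.cos t) t :=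
  (((Real.hasDerivAt_cos t).const_mul a).add
    ((Real.hasDerivAt_sin t).const_mul b)).add_const c

/-- The explicit example surface `z(s,t)` in `E⁴₂` satisfies
`⟨z_s,z_s⟩ = 0`, `⟨z_s,z_t⟩ = -1`, `⟨z_t,z_t⟩ = -8√s` for `s > 0`. -/
theorem stmt_7 :
    let z : ℝ → ℝ → Fin 4 → ℝ := fun s t =>
      ![-4 * Real.sqrt s * Real.cos t + s * Real.sin t + (1/2) * Real.cos t,
        -4 * Real.sqrt s * Real.sin t - s * Real.cos t + (1/2) * Real.sin t,
        -4 * Real.sqrt s * Real.sin t - s * Real.cos t - (1/2) * Real.sin t,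
        -4 * Real.sqrt s * Real.cos t + s * Real.sin t - (1/2) * Real.cos t]
    ∀ s t, 0 < s →
      neutralInner (fun i => deriv (fun s' => z s' t i) s)
        (fun i => deriv (fun s' => z s' t i) s) = 0 ∧
      neutralInner (fun i => deriv (fun s' => z s' t i) s)
        (fun i => deriv (fun t' => z s t' i) t) = -1 ∧
      neutralInner (fun i => deriv (fun t' => z s t' i) t)
        (fun i => deriv (fun t' => z s t' i) t) = -8 * Real.sqrt s := by
  intro z s t hs
  have hsq : Real.sqrt s ≠ 0 := by positivity
  have hss : Real.sqrt s * Real.sqrt s = s := Real.mul_self_sqrt hs.le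
  -- s-derivatives
  have es0 : (fun s' => z s' t 0)
      = fun s' => (-4 * Real.cos t) * Real.sqrt s' + Real.sin t * s' + (1/2) * Real.cos t := by
    funext s'; simp only [z, Matrix.cons_val_zero]; ring
  have es1 : (fun s' => z s' t 1)
      = fun s' => (-4 * Real.sin t) * Real.sqrt s' + (-Real.cos t) * s' + (1/2) * Real.sin t := by
    funext s'; simp only [z, Matrix.cons_val_one, Matrix.head_cons, Matrix.cons_val_zero]; ring
  have es2 : (fun s' => z s' t 2)
      = fun s' => (-4 * Real.sin t) * Real.sqrt s' + (-Real.cos t) * s' + (-(1/2) * Real.sin t) := by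
    funext s'; simp only [z]; simp only [Matrix.cons_val_two, Matrix.cons_val_three, Matrix.tail_cons, Matrix.head_cons]; ring
  have es3 : (fun s' => z s' t 3)
      = fun s' => (-4 * Real.cos t) * Real.sqrt s' + Real.sin t * s' + (-(1/2) * Real.cos t) := by
    funext s'; simp only [z]; simp only [Matrix.cons_val_two, Matrix.cons_val_three, Matrix.tail_cons, Matrix.head_cons]; ring
  have ds0 : deriv (fun s' => z s' t 0) s
      = (-4 * Real.cos t) * (1 / (2 * Real.sqrt s)) + Real.sin t := by
    rw [es0]; exact (hds hs _ _ _).deriv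
  have ds1 : deriv (fun s' => z s' t 1) s
      = (-4 * Real.sin t) * (1 / (2 * Real.sqrt s)) + (-Real.cos t) := by
    rw [es1]; exact (hds hs _ _ _).deriv
  have ds2 : deriv (fun s' => z s' t 2) s
      = (-4 * Real.sin t) * (1 / (2 * Real.sqrt s)) + (-Real.cos t) := by
    rw [es2]; exact (hds hs _ _ _).deriv
  have ds3 : deriv (fun s' => z s' t 3) s
      = (-4 * Real.cos t) * (1 / (2 * Real.sqrt s)) + Real.sin t := by
    rw [es3]; exact (hds hs _ _ _).deriv
  -- t-derivatives
  have et0 : (fun t' => z s t' 0)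
      = fun t' => (-4 * Real.sqrt s + 1/2) * Real.cos t' + s * Real.sin t' + 0 := by
    funext t'; simp only [z, Matrix.cons_val_zero]; ring
  have et1 : (fun t' => z s t' 1)
      = fun t' => (-s) * Real.cos t' + (-4 * Real.sqrt s + 1/2) * Real.sin t' + 0 := by
    funext t'; simp only [z, Matrix.cons_val_one, Matrix.head_cons, Matrix.cons_val_zero]; ring
  have et2 : (fun t' => z s t' 2)
      = fun t' => (-s) * Real.cos t' + (-4 * Real.sqrt s - 1/2) * Real.sin t' + 0 := by
    funext t'; simp only [z]; simp only [Matrix.cons_val_two, Matrix.cons_val_three, Matrix.tail_cons, Matrix.head_cons]; ring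
  have et3 : (fun t' => z s t' 3)
      = fun t' => (-4 * Real.sqrt s - 1/2) * Real.cos t' + s * Real.sin t' + 0 := by
    funext t'; simp only [z]; simp only [Matrix.cons_val_two, Matrix.cons_val_three, Matrix.tail_cons, Matrix.head_cons]; ring
  have dt0 : deriv (fun t' => z s t' 0) t
      = (-4 * Real.sqrt s + 1/2) * (-Real.sin t) + s * Real.cos t := by
    rw [et0]; exact (hdt t _ _ _).deriv
  have dt1 : deriv (fun t' => z s t' 1) t
      = (-s) * (-Real.sin t) + (-4 * Real.sqrt s + 1/2) * Real.cos t := by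
    rw [et1]; exact (hdt t _ _ _).deriv
  have dt2 : deriv (fun t' => z s t' 2) t
      = (-s) * (-Real.sin t) + (-4 * Real.sqrt s - 1/2) * Real.cos t := by
    rw [et2]; exact (hdt t _ _ _).deriv
  have dt3 : deriv (fun t' => z s t' 3) t
      = (-4 * Real.sqrt s - 1/2) * (-Real.sin t) + s * Real.cos t := by
    rw [et3]; exact (hdt t _ _ _).deriv
  have pyth := Real.sin_sq_add_cos_sq t
  refine ⟨?_, ?_, ?_⟩
  · simp only [neutralInner, ds0, ds1, ds2, ds3]; ring
  · simp only [neutralInner, ds0, ds1, ds2, ds3, dt0, dt1, dt2, dt3]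
    linear_combination (-1 : ℝ) * pyth
  · simp only [neutralInner, dt0, dt1, dt2, dt3]
    linear_combination (-8 * Real.sqrt s) * pyth
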